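/- Let G be a bipartite graph with parts U and V, let ξ ∈ (0,1), let X ⊆ V be nonempty, and let S be a ξ-core of X. If S is a ξ-witness (i.e., S = ∅ or |S| ≥ 24/ξ²), then X is ξ-balanced. -/

import Mathlib

/-- Number of edges of the bipartite graph `E ⊆ U × V` incident to a set `X ⊆ V`. -/
def eInc {U V : Type} [DecidableEq U] [DecidableEq V] (E : Finset (U × V)) (X : Finset V) : ℕ :=
  (E.filter (fun p => p.2 ∈ X)).card

/-- Degree of a vertex `v ∈ V` in the bipartite graph `E ⊆ U × V`. -/
def bideg {U V : Type} [DecidableEq U] [DecidableEq V] (E : Finset (U × V)) (v : V) : ℕ :=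
  (E.filter (fun p => p.2 = v)).card

/-- `U_X`: the set of vertices of `U` having a neighbour in `X`. -/
def UX {U V : Type} [Fintype U] [DecidableEq U] [DecidableEq V] (E : Finset (U × V))
    (X : Finset V) : Finset U :=
  Finset.univ.filter (fun u => ∃ v ∈ X, (u, v) ∈ E)

/-- `S` is a `ξ`-core of `X`: `S ⊆ X`, every vertex of `X` of degree at least `ξ|U_X|`
belongs to `S`, and every vertex of `S` has degree at least `ξ|U_X|/24`. -/
def IsCore {U V : Type} [Fintype U] [DecidableEq U] [DecidableEq V] (E : Finset (U × V))
    (X S : Finset V) (ξ : ℝ) : Prop :=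
  S ⊆ X ∧ (∀ v ∈ X, ξ * ((UX E X).card : ℝ) ≤ (bideg E v : ℝ) → v ∈ S) ∧
    (∀ v ∈ S, ξ * ((UX E X).card : ℝ) / 24 ≤ (bideg E v : ℝ))

lemma bideg_le_UX {U V : Type} [Fintype U] [DecidableEq U] [DecidableEq V]
    (E : Finset (U × V)) (X : Finset V) {v : V} (hv : v ∈ X) :
    bideg E v ≤ (UX E X).card := by
  apply Finset.card_le_card_of_injOn (fun p => p.1)
  · intro p hp
    simp only [Finset.mem_coe, Finset.mem_filter] at hp
    simp only [UX, Finset.mem_coe, Finset.mem_filter, Finset.mem_univ, true_and]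
    exact ⟨v, hv, by rw [← hp.2]; exact hp.1⟩
  · intro p hp q hq h
    simp only [Finset.coe_filter, Set.mem_setOf_eq] at hp hq
    exact Prod.ext h (hp.2.trans hq.2.symm)

lemma UX_le_eInc {U V : Type} [Fintype U] [DecidableEq U] [DecidableEq V]
    (E : Finset (U × V)) (X : Finset V) :
    (UX E X).card ≤ eInc E X := by
  have : UX E X = (E.filter (fun p => p.2 ∈ X)).image (fun p => p.1) := by
    ext u
    simp only [UX, Finset.mem_filter, Finset.mem_univ, true_and, Finset.mem_image]
    constructor
    · rintro ⟨v, hv, he⟩; exact ⟨(u, v), by simp [he, hv]⟩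
    · rintro ⟨p, hp, rfl⟩; exact ⟨p.2, hp.2, hp.1⟩
  rw [this]
  exact Finset.card_image_le

lemma sum_bideg_le_eInc {U V : Type} [DecidableEq U] [DecidableEq V]
    (E : Finset (U × V)) (X S : Finset V) (hS : S ⊆ X) :
    ∑ v ∈ S, bideg E v ≤ eInc E X := by
  have h1 : (E.filter (fun p => p.2 ∈ S)) = S.biUnion (fun v => E.filter (fun p => p.2 = v)) := by
    ext p
    simp only [Finset.mem_filter, Finset.mem_biUnion]
    constructor
    · rintro ⟨hp, hs⟩; exact ⟨p.2, hs, hp, rfl⟩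
    · rintro ⟨v, hv, hp, rfl⟩; exact ⟨hp, hv⟩
  have h2 : ∑ v ∈ S, bideg E v = (E.filter (fun p => p.2 ∈ S)).card := by
    rw [h1, Finset.card_biUnion]
    · rfl
    · intro a _ b _ hab
      refine Finset.disjoint_left.mpr (fun p hp hq => hab ?_)
      simp only [Finset.mem_filter] at hp hq
      exact hp.2.symm.trans hq.2
  rw [h2]
  apply Finset.card_le_card
  intro p hp
  simp only [Finset.mem_filter] at hp ⊢
  exact ⟨hp.1, hS hp.2⟩

theorem stmt3 {U V : Type} [Fintype U] [Fintype V] [DecidableEq U] [DecidableEq V]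
    (E : Finset (U × V)) (ξ : ℝ) (hξ0 : 0 < ξ) (hξ1 : ξ < 1)
    (X S : Finset V) (hX : X.Nonempty) (hcore : IsCore E X S ξ)
    (hwit : S = ∅ ∨ 24 / ξ ^ 2 ≤ (S.card : ℝ)) :
    ∀ v ∈ X, (bideg E v : ℝ) ≤ ξ * (eInc E X : ℝ) := by
  intro v hv
  obtain ⟨hSX, hW1, hW2⟩ := hcore
  have hmle' : (((UX E X).card : ℕ) : ℝ) ≤ (eInc E X : ℝ) := by exact_mod_cast UX_le_eInc E X
  have hdeg' : ((bideg E v : ℕ) : ℝ) ≤ (((UX E X).card : ℕ) : ℝ) := by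
    exact_mod_cast bideg_le_UX E X hv
  set m : ℝ := ((UX E X).card : ℝ) with hm
  have hm0 : 0 ≤ m := Nat.cast_nonneg _
  have hmle : m ≤ (eInc E X : ℝ) := hmle'
  rcases hwit with hS | hS
  · -- S empty: every vertex has degree < ξ m
    have hlt : (bideg E v : ℝ) < ξ * m := by
      by_contra h
      push_neg at h
      have := hW1 v hv h
      simp [hS] at this
    calc (bideg E v : ℝ) ≤ ξ * m := le_of_lt hlt
    _ ≤ ξ * (eInc E X : ℝ) := by nlinarith
  · -- big S: e(X) ≥ |S| ξ m / 24 ≥ m/ξ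
    have hdeg : (bideg E v : ℝ) ≤ m := hdeg'
    have hsum : (S.card : ℝ) * (ξ * m / 24) ≤ (eInc E X : ℝ) := by
      have h1 : (S.card : ℝ) * (ξ * m / 24) ≤ ∑ u ∈ S, (bideg E u : ℝ) := by
        calc (S.card : ℝ) * (ξ * m / 24) = ∑ _u ∈ S, (ξ * m / 24) := by
              rw [Finset.sum_const, nsmul_eq_mul]
        _ ≤ ∑ u ∈ S, (bideg E u : ℝ) := Finset.sum_le_sum (fun u hu => hW2 u hu)
      have h2 : (∑ u ∈ S, (bideg E u : ℝ)) ≤ (eInc E X : ℝ) := by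
        rw [← Nat.cast_sum]
        exact_mod_cast sum_bideg_le_eInc E X S hSX
      linarith
    have hξm : 0 ≤ ξ * m / 24 := by positivity
    have : (24 / ξ ^ 2) * (ξ * m / 24) ≤ (eInc E X : ℝ) :=
      le_trans (mul_le_mul_of_nonneg_right hS hξm) hsum
    have hmatch : (24 / ξ ^ 2) * (ξ * m / 24) = m / ξ := by
      field_simp
    rw [hmatch] at this
    calc (bideg E v : ℝ) ≤ m := hdeg
    _ ≤ ξ * (eInc E X : ℝ) := by
        rw [div_le_iff₀ hξ0] at this
        linarith [this]
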